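/- arXiv:1404.6834 — 5 statements merged into one kernel-verified Lean document; each statement's English description precedes it below -/
import Mathlib

section
/- Let (Q, f) be a triangulation quiver and let k be a vertex of Q at which there is no loop. Let α and ᾱ be the two arrows starting at k. Then the six arrows α, f(α), f²(α), ᾱ, f(ᾱ), f²(ᾱ) are pairwise distinct (and they form two cycles of the permutation f). -/
/-- Let `(Q, f)` be a triangulation quiver (`f³ = id`) and `k` a vertex
with no loop at it. If `α` and `ᾱ` are the two arrows starting at `k`, then the six
arrows `α, f(α), f²(α), ᾱ, f(ᾱ), f²(ᾱ)` are pairwise distinct. -/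
theorem triangulationQuiver_six_distinct_arrows {V A : Type*} [Fintype V] [Fintype A]
    [DecidableEq V] [DecidableEq A]
    (s t : A → V) (f : A → A)
    (hf : Function.Bijective f)
    (hout : ∀ v : V, (Finset.univ.filter (fun a => s a = v)).card = 2)
    (hin : ∀ v : V, (Finset.univ.filter (fun a => t a = v)).card = 2)
    (hsf : ∀ a : A, s (f a) = t a)
    (hf3 : ∀ a : A, f (f (f a)) = a)
    (bar : A → A) (hbar : ∀ a : A, bar a ≠ a ∧ s (bar a) = s a)
    (k : V) (hk : ∀ e : A, ¬ (s e = k ∧ t e = k))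
    (α : A) (hα : s α = k) :
    [α, f α, f (f α), bar α, f (bar α), f (f (bar α))].Pairwise (· ≠ ·) := by
  obtain ⟨hinj, -⟩ := hf
  set b := bar α with hbdef
  have hb1 : b ≠ α := (hbar α).1
  have hb2 : s b = k := (hbar α).2.trans hα
  have noloop : ∀ e, s e = k → t e ≠ k := fun e hs ht => hk e ⟨hs, ht⟩
  have L1 : f α ≠ α := fun h => noloop α hα (by rw [← hsf, h, hα])
  have L2 : f b ≠ b := fun h => noloop b hb2 (by rw [← hsf, h, hb2])
  have L3 : b ≠ f α := fun h => noloop α hα (by rw [← hsf, ← h, hb2])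
  have L4 : f b ≠ α := fun h => noloop b hb2 (by rw [← hsf, h, hα])
  have e1 : α ≠ f α := L1.symm
  have e2 : α ≠ f (f α) := fun h => L1 ((congrArg f h).trans (hf3 α))
  have e3 : α ≠ b := hb1.symm
  have e4 : α ≠ f b := fun h => L4 h.symm
  have e5 : α ≠ f (f b) := fun h => L3 ((congrArg f h).trans (hf3 b)).symm
  have e6 : f α ≠ f (f α) := fun h => L1 (hinj h).symm
  have e7 : f α ≠ b := fun h => L3 h.symm
  have e8 : f α ≠ f b := fun h => hb1 (hinj h).symm
  have e9 : f α ≠ f (f b) := fun h => L4 (hinj h).symm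
  have e10 : f (f α) ≠ b := fun h =>
    L4 ((hf3 α).symm.trans (congrArg f h)).symm
  have e11 : f (f α) ≠ f b := fun h => L3 (hinj h).symm
  have e12 : f (f α) ≠ f (f b) := fun h => hb1 (hinj (hinj h)).symm
  have e13 : b ≠ f b := L2.symm
  have e14 : b ≠ f (f b) := fun h => L2 ((congrArg f h).trans (hf3 b))
  have e15 : f b ≠ f (f b) := fun h => L2 (hinj h).symm
  simp only [List.pairwise_cons, List.mem_cons, List.mem_singleton,
    List.not_mem_nil, forall_eq_or_imp, forall_eq, List.Pairwise.nil]
  exact ⟨⟨e1, e2, e3, e4, e5, fun _ h => h.elim⟩, ⟨e6, e7, e8, e9, fun _ h => h.elim⟩,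
    ⟨e10, e11, e12, fun _ h => h.elim⟩, ⟨e13, e14, fun _ h => h.elim⟩,
    ⟨e15, fun _ h => h.elim⟩, fun _ h => h.elim, trivial⟩
end

section
/- Let (Q, f) be a triangulation quiver and let k be a vertex of Q without loops. Let α, ᾱ be the two arrows starting at k and set α₁ = α, β₁ = f(α), γ₁ = f²(α), α₂ = ᾱ, β₂ = f(ᾱ), γ₂ = f²(ᾱ). Then there is no 2-cycle in Q passing through k (i.e., there exist no arrows ε, δ with s(ε) = k = t(δ) and t(ε) = s(δ)) if and only if n_{α₁} > 2, n_{γ₁} > 2, n_{β₁} > 1 and n_{β₂} > 1. -/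
/-- Let `(Q, f)` be a triangulation quiver and `k` a vertex without
loops, with `α, ᾱ` the two arrows starting at `k`, and set `α₁ = α`, `β₁ = f(α)`,
`γ₁ = f²(α)`, `α₂ = ᾱ`, `β₂ = f(ᾱ)`, `γ₂ = f²(ᾱ)`. Then there is no 2-cycle in `Q`
through `k` iff `n_{α₁} > 2`, `n_{γ₁} > 2`, `n_{β₁} > 1` and `n_{β₂} > 1`, where
`n_a` is the least `n > 0` with `gⁿ(a) = a` (the minimal period of `g` at `a`). -/
theorem triangulationQuiver_no_two_cycle_iff {V A : Type*} [Fintype V] [Fintype A]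
    [DecidableEq V] [DecidableEq A]
    (s t : A → V) (f : A → A)
    (hf : Function.Bijective f)
    (hout : ∀ v : V, (Finset.univ.filter (fun a => s a = v)).card = 2)
    (hin : ∀ v : V, (Finset.univ.filter (fun a => t a = v)).card = 2)
    (hsf : ∀ a : A, s (f a) = t a)
    (hf3 : ∀ a : A, f (f (f a)) = a)
    (bar : A → A) (hbar : ∀ a : A, bar a ≠ a ∧ s (bar a) = s a)
    (g : A → A) (hg : ∀ a : A, g a = bar (f a))
    (k : V) (hk : ∀ e : A, ¬ (s e = k ∧ t e = k))
    (α : A) (hα : s α = k) :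
    (¬ ∃ ε δ : A, s ε = k ∧ t δ = k ∧ t ε = s δ) ↔
      (2 < Function.minimalPeriod g α ∧
        2 < Function.minimalPeriod g (f (f α)) ∧
        1 < Function.minimalPeriod g (f α) ∧
        1 < Function.minimalPeriod g (f (bar α))) := by
  have hbar_ne : ∀ a, bar a ≠ a := fun a => (hbar a).1
  have hbar_s : ∀ a, s (bar a) = s a := fun a => (hbar a).2
  have finj : ∀ a b : A, f a = f b → a = b := fun a b h => by
    rw [← hf3 a, h, hf3]
  -- uniqueness of out-arrows
  have houtu : ∀ a c : A, s c = s a → c = a ∨ c = bar a := by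
    intro a c h
    by_contra hc
    push_neg at hc
    have hcard := hout (s a)
    have hsub : ({a, bar a, c} : Finset A) ⊆ Finset.univ.filter (fun x => s x = s a) := by
      intro x hx
      simp only [Finset.mem_insert, Finset.mem_singleton] at hx
      rcases hx with rfl | rfl | rfl <;> simp [hbar_s, h]
    have h3 : ({a, bar a, c} : Finset A).card = 3 := by
      rw [Finset.card_insert_of_notMem, Finset.card_insert_of_notMem,
        Finset.card_singleton]
      · simp [Ne.symm hc.2]
      · simp only [Finset.mem_insert, Finset.mem_singleton, not_or]
        exact ⟨Ne.symm (hbar_ne a), Ne.symm hc.1⟩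
    have := Finset.card_le_card hsub
    omega
  have hbar2 : ∀ a, bar (bar a) = a := by
    intro a
    rcases houtu a (bar (bar a)) ((hbar_s (bar a)).trans (hbar_s a)) with h | h
    · exact h
    · exact absurd h (hbar_ne (bar a))
  have barinj : ∀ a b : A, bar a = bar b → a = b := fun a b h => by
    rw [← hbar2 a, h, hbar2]
  -- uniqueness of in-arrows
  have hintu : ∀ a b c : A, t b = t a → b ≠ a → t c = t a → c = a ∨ c = b := by
    intro a b c htb hba htc
    by_contra hc
    push_neg at hc
    have hcard := hin (t a)
    have hsub : ({a, b, c} : Finset A) ⊆ Finset.univ.filter (fun x => t x = t a) := by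
      intro x hx
      simp only [Finset.mem_insert, Finset.mem_singleton] at hx
      rcases hx with rfl | rfl | rfl <;> simp [htb, htc]
    have h3 : ({a, b, c} : Finset A).card = 3 := by
      rw [Finset.card_insert_of_notMem, Finset.card_insert_of_notMem,
        Finset.card_singleton]
      · simp [Ne.symm hc.2]
      · simp only [Finset.mem_insert, Finset.mem_singleton, not_or]
        exact ⟨Ne.symm hba, Ne.symm hc.1⟩
    have := Finset.card_le_card hsub
    omega
  -- g is injective, hence all points periodic
  have ginj : Function.Injective g := by
    intro a b h
    rw [hg, hg] at h
    exact finj a b (barinj _ _ h)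
  have gper : ∀ x : A, 0 < Function.minimalPeriod g x := by
    intro x
    obtain ⟨m, n, hmn, h⟩ := Finite.exists_ne_map_eq_of_infinite (fun n : ℕ => g^[n] x)
    rcases Nat.lt_or_ge m n with hlt | hge
    · have : g^[m] (g^[n - m] x) = g^[m] x := by
        rw [← Function.iterate_add_apply]
        rw [Nat.add_sub_cancel' hlt.le]
        exact h.symm
      have hper : Function.IsPeriodicPt g (n - m) x := ginj.iterate m this
      exact Function.IsPeriodicPt.minimalPeriod_pos (by omega) hper
    · have hlt : n < m := lt_of_le_of_ne hge (fun e => hmn e.symm)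
      have : g^[n] (g^[m - n] x) = g^[n] x := by
        rw [← Function.iterate_add_apply, Nat.add_sub_cancel' hlt.le]
        exact h
      have hper : Function.IsPeriodicPt g (m - n) x := ginj.iterate n this
      exact Function.IsPeriodicPt.minimalPeriod_pos (by omega) hper
  have per1 : ∀ x : A, 1 < Function.minimalPeriod g x ↔ g x ≠ x := by
    intro x
    constructor
    · intro h hx
      have : Function.IsPeriodicPt g 1 x := by
        simpa [Function.IsPeriodicPt, Function.IsFixedPt] using hx
      have := this.minimalPeriod_le one_pos
      omega
    · intro h
      have hpos := gper x
      rcases Nat.lt_or_ge 1 (Function.minimalPeriod g x) with h1 | h1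
      · exact h1
      · exfalso
        have hm : Function.minimalPeriod g x = 1 := by omega
        have := Function.isPeriodicPt_minimalPeriod g x
        rw [hm] at this
        exact h (by simpa [Function.IsPeriodicPt, Function.IsFixedPt] using this)
  have per2 : ∀ x : A, 2 < Function.minimalPeriod g x ↔ (g x ≠ x ∧ g (g x) ≠ x) := by
    intro x
    constructor
    · intro h
      refine ⟨(per1 x).mp (by omega), fun hx => ?_⟩
      have : Function.IsPeriodicPt g 2 x := by
        simpa [Function.IsPeriodicPt, Function.IsFixedPt,
          Function.iterate_succ_apply', Function.iterate_one] using hx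
      have := this.minimalPeriod_le two_pos
      omega
    · intro ⟨h1, h2⟩
      have hpos := gper x
      rcases Nat.lt_or_ge 2 (Function.minimalPeriod g x) with hlt | hle
      · exact hlt
      · exfalso
        have := Function.isPeriodicPt_minimalPeriod g x
        interval_cases hm : Function.minimalPeriod g x
        · exact h1 (by simpa [Function.IsPeriodicPt, Function.IsFixedPt] using this)
        · exact h2 (by simpa [Function.IsPeriodicPt, Function.IsFixedPt,
            Function.iterate_succ_apply', Function.iterate_one] using this)
  -- basic vertex facts
  have noloop : ∀ a : A, s a = k → t a ≠ k := fun a h1 h2 => hk a ⟨h1, h2⟩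
  have hᾱk : s (bar α) = k := (hbar_s α).trans hα
  have tγ₁ : t (f (f α)) = k := by rw [← hsf, hf3]; exact hα
  have tγ₂ : t (f (f (bar α))) = k := by rw [← hsf, hf3]; exact hᾱk
  have hfαα : f α ≠ α := fun h => noloop α hα (by rw [← hsf, h, hα])
  have hfαᾱ : f α ≠ bar α := fun h =>
    noloop α hα (by rw [← hsf, h, hᾱk])
  have hfᾱᾱ : f (bar α) ≠ bar α := fun h => noloop (bar α) hᾱk (by rw [← hsf, h, hᾱk])
  have hfᾱα : f (bar α) ≠ α := fun h => noloop (bar α) hᾱk (by rw [← hsf, h, hα])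
  have hγ₁β₁ : f (f α) ≠ f α := fun h => hfαα (finj _ _ h)
  have hγ₂β₂ : f (f (bar α)) ≠ f (bar α) := fun h => hfᾱᾱ (finj _ _ h)
  have hfαγ₂ : f α ≠ f (f (bar α)) := by
    intro h
    have h2 : f (f α) = bar α := by
      have := congrArg f h
      rwa [hf3] at this
    exact noloop (bar α) hᾱk (h2 ▸ tγ₁)
  have hfᾱγ₁ : f (bar α) ≠ f (f α) := by
    intro h
    have h2 : f (f (bar α)) = α := by
      have := congrArg f h
      rwa [hf3] at this
    exact noloop α hα (h2 ▸ tγ₂)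
  have hγ₁γ₂ : f (f α) ≠ f (f (bar α)) :=
    fun h => hbar_ne α ((finj _ _ (finj _ _ h)).symm)
  -- main equivalence
  constructor
  · intro hno
    refine ⟨(per2 α).mpr ⟨?_, ?_⟩, (per2 (f (f α))).mpr ⟨?_, ?_⟩,
      (per1 (f α)).mpr ?_, (per1 (f (bar α))).mpr ?_⟩
    · -- g α ≠ α
      intro h
      rw [hg] at h
      exact hfαᾱ (by rw [← hbar2 (f α), h])
    · -- g (g α) ≠ α
      intro h
      rw [hg, hg] at h
      -- bar (f (bar (f α))) = α → f (bar (f α)) = bar α → bar (f α) = f (f (bar α))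
      have h1 : f (bar (f α)) = bar α := by rw [← hbar2 (f (bar (f α))), h]
      have h2 : bar (f α) = f (f (bar α)) := by
        have := congrArg (fun x => f (f x)) h1
        simpa [hf3] using this
      -- then t α = s γ₂ : two-cycle (α, γ₂)
      exact hno ⟨α, f (f (bar α)), hα, tγ₂, by
        rw [← hsf α, ← h2, hbar_s]⟩
    · -- g γ₁ ≠ γ₁
      intro h
      rw [hg, hf3] at h
      have : t (bar α) = k := by rw [h]; exact tγ₁
      exact noloop (bar α) hᾱk this
    · -- g (g γ₁) ≠ γ₁
      intro h
      rw [hg (f (f α)), hf3, hg] at h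
      have h1 : f (bar α) = bar (f (f α)) := by rw [← hbar2 (f (bar α)), h]
      exact hno ⟨bar α, f (f α), hᾱk, tγ₁, by
        rw [← hsf (bar α), h1, hbar_s]⟩
    · -- g β₁ ≠ β₁
      intro h
      rw [hg] at h
      have h1 : f (f α) = bar (f α) := by rw [← hbar2 (f (f α)), h]
      -- t α = s (f α) = s (bar (f α))... derive t α = s γ₁
      exact hno ⟨α, f (f α), hα, tγ₁, by
        rw [← hsf α, h1, hbar_s]⟩
    · -- g β₂ ≠ β₂
      intro h
      rw [hg] at h
      have h1 : f (f (bar α)) = bar (f (bar α)) := by rw [← hbar2 (f (f (bar α))), h]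
      exact hno ⟨bar α, f (f (bar α)), hᾱk, tγ₂, by
        rw [← hsf (bar α), h1, hbar_s]⟩
  · rintro ⟨h1, h2, h3, h4⟩ ⟨ε, δ, hε, hδ, hc⟩
    have h1' := (per2 α).mp h1
    have h2' := (per2 (f (f α))).mp h2
    have h3' := (per1 (f α)).mp h3
    have h4' := (per1 (f (bar α))).mp h4
    rw [hg] at h3' h4'
    rw [hg (f (f α)), hf3, hg] at h2'
    rw [hg (g α), hg α] at h1'
    have hεc := houtu α ε (hε.trans hα.symm)
    have hδc := hintu (f (f α)) (f (f (bar α))) δ (tγ₂.trans tγ₁.symm)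
      (Ne.symm hγ₁γ₂) (hδ.trans tγ₁.symm)
    rcases hεc with he | he <;> rcases hδc with hd | hd <;> rw [he, hd] at hc
    · -- ε = α, δ = γ₁
      have hs : s (f (f α)) = s (f α) := (hc.symm.trans (hsf α).symm)
      rcases houtu (f α) (f (f α)) hs with h | h
      · exact hγ₁β₁ h
      · exact h3' (by rw [h, hbar2])
    · -- ε = α, δ = γ₂
      have hs : s (f α) = s (f (f (bar α))) := (hsf α).trans hc
      rcases houtu (f (f (bar α))) (f α) hs with h | h
      · exact hfαγ₂ h
      · apply h1'.2
        rw [h, hbar2, hf3, hbar2]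
    · -- ε = bar α, δ = γ₁
      have hs : s (f (bar α)) = s (f (f α)) := (hsf (bar α)).trans hc
      rcases houtu (f (f α)) (f (bar α)) hs with h | h
      · exact hfᾱγ₁ h
      · exact h2'.2 (by rw [h, hbar2])
    · -- ε = bar α, δ = γ₂
      have hs : s (f (f (bar α))) = s (f (bar α)) := (hc.symm.trans (hsf (bar α)).symm)
      rcases houtu (f (bar α)) (f (f (bar α))) hs with h | h
      · exact hγ₂β₂ h
      · exact h4' (by rw [h, hbar2])
end

section
/- Let (Q, f) be a connected triangulation quiver and let m : Q₁ → ℤ_{>0} be a g-invariant admissible function of multiplicities. Then m_α · n_α = 3 for all arrows α if and only if (Q, f) together with m is isomorphic, via an isomorphism of ribbon quivers preserving the multiplicity function, either to the punctured-monogon model with multiplicities (3,1) or to the tetrahedron model with all multiplicities 1. -/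
/-- Source map of the punctured-monogon triangulation quiver: arrows
`α : 1→1`, `β : 1→2`, `γ : 2→1`, `η : 2→2` are indexed by `0, 1, 2, 3`. -/
def puncturedMonogonS : Fin 4 → Fin 2 := ![0, 0, 1, 1]

/-- Target map of the punctured-monogon triangulation quiver. -/
def puncturedMonogonT : Fin 4 → Fin 2 := ![0, 1, 0, 1]

/-- The permutation `f` of the punctured-monogon triangulation quiver:
`f(α) = β`, `f(β) = γ`, `f(γ) = α`, `f(η) = η`. -/
def puncturedMonogonF : Fin 4 → Fin 4 := ![1, 2, 0, 3]

/-- Multiplicities `(3, 1)` on the punctured monogon: `m(α) = 3`, `m(β) = m(γ) = m(η) = 1`. -/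
def puncturedMonogonM : Fin 4 → ℕ := ![3, 1, 1, 1]

/-- The four cyclically ordered triples `(1,2,3), (1,3,4), (1,4,2), (2,4,3)` of the
tetrahedron (here with elements `0, 1, 2, 3` of `Fin 4`). -/
def tetTriple : Fin 4 → Fin 3 → Fin 4 := ![![0, 1, 2], ![0, 2, 3], ![0, 3, 1], ![1, 3, 2]]

/-- Source map of the tetrahedron triangulation quiver: the arrow `(i, j)` goes from the
2-element subset `{tᵢ(j), tᵢ(j+1)}` to `{tᵢ(j+1), tᵢ(j+2)}`, where `tᵢ` is the `i`-th
triple; vertices are the six 2-element subsets of `Fin 4`. -/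
def tetS (p : Fin 4 × Fin 3) : Finset (Fin 4) := {tetTriple p.1 p.2, tetTriple p.1 (p.2 + 1)}

/-- Target map of the tetrahedron triangulation quiver. -/
def tetTgt (p : Fin 4 × Fin 3) : Finset (Fin 4) :=
  {tetTriple p.1 (p.2 + 1), tetTriple p.1 (p.2 + 2)}

/-- The permutation `f` of the tetrahedron triangulation quiver, cycling the three arrows
of each triple. -/
def tetF (p : Fin 4 × Fin 3) : Fin 4 × Fin 3 := (p.1, p.2 + 1)

/-- auxiliary: the `bar` involution of the punctured monogon model. -/
def pmBar : Fin 4 → Fin 4 := ![1, 0, 3, 2]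
/-- auxiliary: the permutation `g` of the punctured monogon model. -/
def pmG : Fin 4 → Fin 4 := ![0, 3, 1, 2]
/-- auxiliary: the `bar` involution of the tetrahedron model. -/
def tetBar : Fin 4 × Fin 3 → Fin 4 × Fin 3 := fun p =>
  ![![(2,2),(3,2),(1,0)], ![(0,2),(3,1),(2,0)], ![(1,2),(3,0),(0,0)], ![(2,1),(1,1),(0,1)]] p.1 p.2
/-- auxiliary: the permutation `g` of the tetrahedron model. -/
def tetG : Fin 4 × Fin 3 → Fin 4 × Fin 3 := fun p => tetBar (tetF p)

lemma minper_three {α : Type*} (g : α → α) (a : α) (h3 : g (g (g a)) = a) (h1 : g a ≠ a) :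
    Function.minimalPeriod g a = 3 := by
  have hper : Function.IsPeriodicPt g 3 a := by
    show g^[3] a = a
    simpa [Function.iterate_succ_apply] using h3
  rcases (Nat.prime_three.eq_one_or_self_of_dvd _ hper.minimalPeriod_dvd) with h | h
  · exact absurd (Function.minimalPeriod_eq_one_iff_isFixedPt.mp h) h1
  · exact h

lemma eqvgen_iff {V : Type*} {r : V → V → Prop} {U : V → Prop}
    (h : ∀ x y, r x y → (U x ↔ U y)) : ∀ {x y}, Relation.EqvGen r x y → (U x ↔ U y) := by
  intro x y hxy
  induction hxy with
  | rel a b hr => exact h a b hr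
  | refl => exact Iff.rfl
  | symm a b _ ih => exact ih.symm
  | trans a b c _ _ ih1 ih2 => exact ih1.trans ih2

lemma pSame {V A : Type*} [Fintype A] [DecidableEq A] [DecidableEq V] (s : A → V)
    (hout : ∀ v : V, (Finset.univ.filter (fun a => s a = v)).card = 2)
    (bar : A → A) (hbar : ∀ a : A, bar a ≠ a ∧ s (bar a) = s a) :
    ∀ a b : A, s b = s a → b = a ∨ b = bar a := by
  intro a b hsb
  by_contra hcon
  push_neg at hcon
  obtain ⟨h1, h2⟩ := hcon
  obtain ⟨u, v, huv, hS⟩ := Finset.card_eq_two.mp (hout (s a))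
  have ha : a ∈ ({u, v} : Finset A) := by rw [← hS]; simp
  have hb' : bar a ∈ ({u, v} : Finset A) := by rw [← hS]; simp [(hbar a).2]
  have hb : b ∈ ({u, v} : Finset A) := by rw [← hS]; simp [hsb]
  have hne := (hbar a).1
  simp only [Finset.mem_insert, Finset.mem_singleton] at ha hb hb'
  rcases ha with rfl | rfl <;> rcases hb with rfl | rfl <;> rcases hb' with h3 | h3 <;> tauto
/-- Let `(Q, f)` be a connected triangulation quiver with a
`g`-invariant admissible multiplicity function `m`. Then `m_α · n_α = 3` for all arrows
iff `(Q, f, m)` is isomorphic (as a ribbon quiver with multiplicities) either to the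
punctured monogon with multiplicities `(3, 1)` or to the tetrahedron with all
multiplicities `1`. -/
theorem triangulationQuiver_exceptional_classification {V A : Type*} [Fintype V]
    [Fintype A] [DecidableEq V] [DecidableEq A]
    (s t : A → V) (f : A → A)
    (hf : Function.Bijective f)
    (hout : ∀ v : V, (Finset.univ.filter (fun a => s a = v)).card = 2)
    (hin : ∀ v : V, (Finset.univ.filter (fun a => t a = v)).card = 2)
    (hsf : ∀ a : A, s (f a) = t a)
    (hf3 : ∀ a : A, f (f (f a)) = a)
    (bar : A → A) (hbar : ∀ a : A, bar a ≠ a ∧ s (bar a) = s a)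
    (g : A → A) (hg : ∀ a : A, g a = bar (f a))
    (hne : Nonempty V)
    (hconn : ∀ u v : V, Relation.EqvGen (fun x y => ∃ e : A, s e = x ∧ t e = y) u v)
    (m : A → ℕ) (hmpos : ∀ a : A, 0 < m a)
    (hminv : ∀ a : A, m (g a) = m a)
    (hadm : ∀ a : A, 3 ≤ m a * Function.minimalPeriod g a) :
    (∀ a : A, m a * Function.minimalPeriod g a = 3) ↔
      ((∃ (φ₀ : V ≃ Fin 2) (φ₁ : A ≃ Fin 4),
          (∀ e : A, puncturedMonogonS (φ₁ e) = φ₀ (s e)) ∧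
          (∀ e : A, puncturedMonogonT (φ₁ e) = φ₀ (t e)) ∧
          (∀ e : A, φ₁ (f e) = puncturedMonogonF (φ₁ e)) ∧
          (∀ e : A, m e = puncturedMonogonM (φ₁ e))) ∨
        (∃ (φ₀ : V → Finset (Fin 4)) (φ₁ : A ≃ Fin 4 × Fin 3),
          Function.Injective φ₀ ∧
          Set.range φ₀ = {S : Finset (Fin 4) | S.card = 2} ∧
          (∀ e : A, tetS (φ₁ e) = φ₀ (s e)) ∧
          (∀ e : A, tetTgt (φ₁ e) = φ₀ (t e)) ∧
          (∀ e : A, φ₁ (f e) = tetF (φ₁ e)) ∧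
          (∀ e : A, m e = 1))) := by
  have hfinj := hf.injective
  have hbb : ∀ a : A, bar (bar a) = a := by
    intro a
    rcases pSame s hout bar hbar a (bar (bar a)) (by rw [(hbar (bar a)).2, (hbar a).2]) with h | h
    · exact h
    · exact absurd h (hbar (bar a)).1
  have hbarinj : Function.Injective bar := Function.LeftInverse.injective hbb
  have tseq : ∀ a : A, t a = s (f a) := fun a => (hsf a).symm
  have same_target : ∀ a b : A, t b = t a → b = a ∨ b = f (f (bar (f a))) := by
    intro a b h
    rw [tseq, tseq] at h
    rcases pSame s hout bar hbar (f a) (f b) h with h' | h'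
    · left; exact hfinj h'
    · right; rw [← h', hf3]
  constructor
  · intro hyp
    have hfix : ∀ a : A, (g a = a ∧ m a = 3) ∨ (g a ≠ a ∧ g (g (g a)) = a ∧ m a = 1) := by
      intro a
      have h3 := hyp a
      have hd : m a ∣ 3 := ⟨_, h3.symm⟩
      rcases Nat.prime_three.eq_one_or_self_of_dvd _ hd with h1 | h1
      · right
        have hn : Function.minimalPeriod g a = 3 := by rw [h1, one_mul] at h3; exact h3
        have hper := Function.isPeriodicPt_minimalPeriod g a
        rw [hn] at hper
        have hgper : g (g (g a)) = a := by
          simpa [Function.IsPeriodicPt, Function.IsFixedPt, Function.iterate_succ_apply] using hper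
        refine ⟨fun h => ?_, hgper, h1⟩
        have := Function.minimalPeriod_eq_one_iff_isFixedPt.mpr h
        omega
      · left
        have hn : Function.minimalPeriod g a = 1 := by rw [h1] at h3; omega
        exact ⟨Function.minimalPeriod_eq_one_iff_isFixedPt.mp hn, h1⟩
    have hg3 : ∀ a : A, g (g (g a)) = a := by
      intro a
      rcases hfix a with ⟨h, _⟩ | ⟨_, h, _⟩
      · rw [h, h, h]
      · exact h
    by_cases hEx : ∃ x : A, g x = x
    · -- punctured monogon case
      left
      obtain ⟨a, hga⟩ := hEx
      have hba' : bar (f a) = a := (hg a).symm.trans hga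
      have hfa : f a = bar a := by rw [← hbb (f a), hba']
      obtain ⟨b, hb⟩ : ∃ b, b = bar a := ⟨_, rfl⟩
      obtain ⟨c, hc⟩ : ∃ c, c = f b := ⟨_, rfl⟩
      obtain ⟨η, hη⟩ : ∃ η, η = bar c := ⟨_, rfl⟩
      obtain ⟨v, hv⟩ : ∃ v, v = s a := ⟨_, rfl⟩
      obtain ⟨w, hw⟩ : ∃ w, w = s c := ⟨_, rfl⟩
      have hba : b ≠ a := hb ▸ (hbar a).1
      have hsa : s a = v := hv.symm
      have hsb : s b = v := by rw [hb, (hbar a).2, hsa]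
      have hfab : f a = b := by rw [hfa, hb]
      have hfc : f c = a := by rw [hc, hb, ← hfa]; exact hf3 a
      have hta : t a = v := by rw [tseq, hfab, hsb]
      have hsc : s c = w := hw.symm
      have htb : t b = w := by rw [tseq, ← hc, hsc]
      have htc : t c = v := by rw [tseq, hfc, hsa]
      have hvw : v ≠ w := by
        intro h
        have hsc' : s c = s a := by rw [hsc, ← h, hsa]
        rcases pSame s hout bar hbar a c hsc' with h1 | h1
        · have hfaa : f a = a := by rw [← h1] at hfc ⊢; exact hfc
          exact hba (by rw [← hfab, hfaa])
        · have hcb : c = b := by rw [h1, hb]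
          have h2 : f b = b := by rw [← hc, hcb]
          have h3 : f b = a := by rw [← hcb]; exact hfc
          exact hba (h2.symm.trans h3)
      have hfη : f η = η := by
        have h1 : g b = η := by rw [hg, ← hc, ← hη]
        have h2 := hg3 b
        rw [h1, hg, hg] at h2
        have h3 : f (bar (f η)) = a := by
          have := congrArg bar h2
          rw [hbb, hb, hbb] at this
          exact this
        have h4 : bar (f η) = c := hfinj (h3.trans hfc.symm)
        rw [← hbb (f η), h4, ← hη]
      have hsη : s η = w := by rw [hη, (hbar c).2, hsc]
      have htη : t η = w := by rw [tseq, hfη, hsη]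
      have hηc : η ≠ c := hη ▸ (hbar c).1
      have hca : c ≠ a := fun h => hvw (by rw [← hsa, ← h, hsc])
      have hcb : c ≠ b := fun h => hvw (by rw [← hsb, ← h, hsc])
      have hηa : η ≠ a := fun h => hvw (by rw [← hsa, ← h, hsη])
      have hηb : η ≠ b := fun h => hvw (by rw [← hsb, ← h, hsη])
      have houtv : ∀ e : A, s e = v → e = a ∨ e = b := by
        intro e he
        rcases pSame s hout bar hbar a e (by rw [he, hsa]) with h | h
        · exact Or.inl h
        · exact Or.inr (by rw [h, ← hb])
      have houtw : ∀ e : A, s e = w → e = c ∨ e = η := by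
        intro e he
        rcases pSame s hout bar hbar c e (by rw [he, hsc]) with h | h
        · exact Or.inl h
        · exact Or.inr (by rw [h, ← hη])
      have hinv : ∀ e : A, t e = v → e = c ∨ e = a := by
        intro e he
        rcases same_target a e (by rw [he, hta]) with h | h
        · exact Or.inr h
        · rw [hfab, hb, hbb, hfab, ← hc] at h
          exact Or.inl h
      have hinw : ∀ e : A, t e = w → e = b ∨ e = η := by
        intro e he
        rcases same_target b e (by rw [he, htb]) with h | h
        · exact Or.inl h
        · rw [← hc, ← hη, hfη, hfη] at h
          exact Or.inr h
      have hVc : ∀ u : V, u = v ∨ u = w := by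
        intro u
        have hstep : ∀ x y : V, (∃ e : A, s e = x ∧ t e = y) →
            ((x = v ∨ x = w) ↔ (y = v ∨ y = w)) := by
          rintro x y ⟨e, rfl, rfl⟩
          constructor
          · rintro (h | h)
            · rcases houtv e h with rfl | rfl
              · rw [hta]; exact Or.inl rfl
              · rw [htb]; exact Or.inr rfl
            · rcases houtw e h with rfl | rfl
              · rw [htc]; exact Or.inl rfl
              · rw [htη]; exact Or.inr rfl
          · rintro (h | h)
            · rcases hinv e h with rfl | rfl
              · rw [hsc]; exact Or.inr rfl
              · rw [hsa]; exact Or.inl rfl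
            · rcases hinw e h with rfl | rfl
              · rw [hsb]; exact Or.inl rfl
              · rw [hsη]; exact Or.inr rfl
        exact (eqvgen_iff hstep (hconn u v)).mpr (Or.inl rfl)
      have hAc : ∀ e : A, e = a ∨ e = b ∨ e = c ∨ e = η := by
        intro e
        rcases hVc (s e) with h | h
        · rcases houtv e h with h' | h' <;> tauto
        · rcases houtw e h with h' | h' <;> tauto
      have hma : m a = 3 := by
        rcases hfix a with ⟨_, h⟩ | ⟨h, _⟩
        · exact h
        · exact absurd hga h
      have hgb : g b = η := by rw [hg, ← hc, ← hη]
      have hgc : g c = b := by rw [hg, hfc, ← hb]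
      have hgη : g η = c := by rw [hg, hfη, hη, hbb]
      have hmb : m b = 1 := by
        rcases hfix b with ⟨h, _⟩ | ⟨_, _, h⟩
        · rw [hgb] at h; exact absurd h hηb
        · exact h
      have hmc : m c = 1 := by
        rcases hfix c with ⟨h, _⟩ | ⟨_, _, h⟩
        · rw [hgc] at h; exact absurd h.symm hcb
        · exact h
      have hmη : m η = 1 := by
        rcases hfix η with ⟨h, _⟩ | ⟨_, _, h⟩
        · rw [hgη] at h; exact absurd h.symm hηc
        · exact h
      have hwv : w ≠ v := Ne.symm hvw
      refine ⟨⟨fun x => if x = v then 0 else 1, fun i => if i = 0 then v else w, ?_, ?_⟩,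
        ⟨fun e => if e = a then 0 else if e = b then 1 else if e = c then 2 else 3,
          fun i => ![a, b, c, η] i, ?_, ?_⟩, ?_, ?_, ?_, ?_⟩
      · intro x
        rcases hVc x with rfl | rfl <;> simp [hwv]
      · intro i
        fin_cases i <;> simp [hwv]
      · intro e
        rcases hAc e with rfl | rfl | rfl | rfl <;> simp [hba, hca, hcb, hηa, hηb, hηc]
      · intro i
        fin_cases i <;> simp [hba, hca, hcb, hηa, hηb, hηc]
      · intro e
        rcases hAc e with rfl | rfl | rfl | rfl <;>
          simp [hba, hca, hcb, hηa, hηb, hηc, hsa, hsb, hsc, hsη, hwv, puncturedMonogonS]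
      · intro e
        rcases hAc e with rfl | rfl | rfl | rfl <;>
          simp [hba, hca, hcb, hηa, hηb, hηc, hta, htb, htc, htη, hwv, puncturedMonogonT]
      · intro e
        have hfb : f b = c := hc.symm
        rcases hAc e with rfl | rfl | rfl | rfl <;>
          simp [hfab, hfb, hfc, hfη, hba, hca, hcb, hηa, hηb, hηc, puncturedMonogonF]
      · intro e
        rcases hAc e with rfl | rfl | rfl | rfl <;>
          simp [hma, hmb, hmc, hmη, hba, hca, hcb, hηa, hηb, hηc, puncturedMonogonM]
    · -- tetrahedron case
      right
      have hgfix : ∀ x : A, g x ≠ x := by push_neg at hEx; exact hEx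
      have hginj : Function.Injective g := by
        intro x y h
        rw [hg, hg] at h
        exact hfinj (hbarinj h)
      have hKI : ∀ x : A, g (g x) = f (f (bar x)) := by
        intro x
        apply hginj
        rw [hg3, hg (f (f (bar x))), hf3, hbb]
      have hKI' : ∀ x : A, bar (f (bar (f x))) = f (f (bar x)) := by
        intro x
        have h := hKI x
        rwa [hg, hg] at h
      have hff : ∀ x : A, f x ≠ x := by
        intro x hfx
        apply hgfix (f (bar x))
        rw [hg]
        have h1 := hKI' x
        rw [hfx] at h1
        rw [← h1, hbb]
      have hnl : ∀ x : A, t x ≠ s x := by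
        intro x hx
        rw [tseq] at hx
        rcases pSame s hout bar hbar x (f x) hx with h | h
        · exact hff x h
        · exact hgfix x (by rw [hg, h, hbb])
      have hF1b : ∀ x : A, t (bar x) ≠ t x := by
        intro x h
        rcases same_target x (bar x) h with h' | h'
        · exact (hbar x).1 h'
        · have h2 : f (bar x) = bar (f x) := by rw [h', hf3]
          have h3 := hKI' x
          rw [← h2] at h3
          exact (hbar _).1 h3
      have hF1c : ∀ x : A, t (bar x) ≠ t (f x) := by
        intro x h
        rcases same_target (f x) (bar x) h with h' | h'
        · apply hnl x
          rw [tseq, ← h']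
          exact (hbar x).2
        · have hG : f (f (bar (f (f x)))) = bar (f (bar x)) := by
            have e1 := hKI (f (f x))
            have e2 : g (f (f x)) = bar x := by rw [hg, hf3]
            rw [e2, hg] at e1
            exact e1.symm
          rw [hG] at h'
          have h2 : x = f (bar x) := hbarinj h'
          have h3 : f (f x) = bar x := by conv_lhs => rw [h2, hf3]
          apply hnl (f (f x))
          rw [tseq, hf3, h3, (hbar x).2]
      have hF2 : ∀ x : A, t (bar (f x)) ≠ t (bar x) := by
        intro x h
        rcases same_target (bar x) (bar (f x)) h with h' | h'
        · exact hff x (by rw [← hbb (f x), h', hbb])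
        · have e1 := hKI' (bar x)
          rw [hbb] at e1
          have e2 : f (bar (f (bar x))) = bar (f (f x)) := by
            rw [← hbb (f (bar (f (bar x)))), e1]
          rw [e2] at h'
          apply hgfix (f x)
          apply hginj
          rw [hKI (f x), h', hf3, ← hg]
      obtain ⟨a1⟩ : Nonempty A := by
        obtain ⟨v0⟩ := hne
        have hc2 := hout v0
        have hpos : 0 < (Finset.univ.filter fun a : A => s a = v0).card := by omega
        obtain ⟨x, _⟩ := Finset.card_pos.mp hpos
        exact ⟨x⟩
      obtain ⟨a2, ha2⟩ : ∃ y, y = f a1 := ⟨_, rfl⟩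
      obtain ⟨a3, ha3⟩ : ∃ y, y = f a2 := ⟨_, rfl⟩
      obtain ⟨b1, hb1⟩ : ∃ y, y = bar a1 := ⟨_, rfl⟩
      obtain ⟨b2, hb2⟩ : ∃ y, y = bar a2 := ⟨_, rfl⟩
      obtain ⟨b3, hb3⟩ : ∃ y, y = bar a3 := ⟨_, rfl⟩
      obtain ⟨c1, hc1⟩ : ∃ y, y = f b1 := ⟨_, rfl⟩
      obtain ⟨c2, hc2⟩ : ∃ y, y = f b2 := ⟨_, rfl⟩
      obtain ⟨c3, hc3⟩ : ∃ y, y = f b3 := ⟨_, rfl⟩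
      obtain ⟨d1, hd1⟩ : ∃ y, y = f c1 := ⟨_, rfl⟩
      obtain ⟨d2, hd2⟩ : ∃ y, y = f c2 := ⟨_, rfl⟩
      obtain ⟨d3, hd3⟩ : ∃ y, y = f c3 := ⟨_, rfl⟩
      obtain ⟨v1, hv1⟩ : ∃ y, y = s a1 := ⟨_, rfl⟩
      obtain ⟨v2, hv2⟩ : ∃ y, y = s a2 := ⟨_, rfl⟩
      obtain ⟨v3, hv3⟩ : ∃ y, y = s a3 := ⟨_, rfl⟩
      obtain ⟨v4, hv4⟩ : ∃ y, y = s c1 := ⟨_, rfl⟩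
      obtain ⟨v5, hv5⟩ : ∃ y, y = s c2 := ⟨_, rfl⟩
      obtain ⟨v6, hv6⟩ : ∃ y, y = s c3 := ⟨_, rfl⟩
      have hfa1 : f a1 = a2 := ha2.symm
      have hfa2 : f a2 = a3 := ha3.symm
      have hfa3 : f a3 = a1 := by rw [ha3, ha2]; exact hf3 a1
      have hfb1 : f b1 = c1 := hc1.symm
      have hfb2 : f b2 = c2 := hc2.symm
      have hfb3 : f b3 = c3 := hc3.symm
      have hfc1 : f c1 = d1 := hd1.symm
      have hfc2 : f c2 = d2 := hd2.symm
      have hfc3 : f c3 = d3 := hd3.symm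
      have hfd1 : f d1 = b1 := by rw [hd1, hc1, hb1]; exact hf3 a1 ▸ hf3 (bar a1)
      have hfd2 : f d2 = b2 := by rw [hd2, hc2, hb2]; exact hf3 (bar a2)
      have hfd3 : f d3 = b3 := by rw [hd3, hc3, hb3]; exact hf3 (bar a3)
      have hd1c2 : d1 = bar c2 := by
        rw [hd1, hc1, hb1, hc2, hb2, ha2, hKI']
      have hd2c3 : d2 = bar c3 := by
        rw [hd2, hc2, hb2, hc3, hb3, ha3, hKI']
      have hd3c1 : d3 = bar c1 := by
        rw [hd3, hc3, hb3, hc1, hb1, ← hfa3, hKI']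
      have hsa1 : s a1 = v1 := hv1.symm
      have hsa2 : s a2 = v2 := hv2.symm
      have hsa3 : s a3 = v3 := hv3.symm
      have hsb1 : s b1 = v1 := by rw [hb1, (hbar a1).2, hsa1]
      have hsb2 : s b2 = v2 := by rw [hb2, (hbar a2).2, hsa2]
      have hsb3 : s b3 = v3 := by rw [hb3, (hbar a3).2, hsa3]
      have hsc1 : s c1 = v4 := hv4.symm
      have hsc2 : s c2 = v5 := hv5.symm
      have hsc3 : s c3 = v6 := hv6.symm
      have hsd1 : s d1 = v5 := by rw [hd1c2, (hbar c2).2, hsc2]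
      have hsd2 : s d2 = v6 := by rw [hd2c3, (hbar c3).2, hsc3]
      have hsd3 : s d3 = v4 := by rw [hd3c1, (hbar c1).2, hsc1]
      have hta1 : t a1 = v2 := by rw [tseq, hfa1, hsa2]
      have hta2 : t a2 = v3 := by rw [tseq, hfa2, hsa3]
      have hta3 : t a3 = v1 := by rw [tseq, hfa3, hsa1]
      have htb1 : t b1 = v4 := by rw [tseq, hfb1, hsc1]
      have htb2 : t b2 = v5 := by rw [tseq, hfb2, hsc2]
      have htb3 : t b3 = v6 := by rw [tseq, hfb3, hsc3]
      have htc1 : t c1 = v5 := by rw [tseq, hfc1, hsd1]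
      have htc2 : t c2 = v6 := by rw [tseq, hfc2, hsd2]
      have htc3 : t c3 = v4 := by rw [tseq, hfc3, hsd3]
      have htd1 : t d1 = v1 := by rw [tseq, hfd1, hsb1]
      have htd2 : t d2 = v2 := by rw [tseq, hfd2, hsb2]
      have htd3 : t d3 = v3 := by rw [tseq, hfd3, hsb3]
      -- vertex distinctness
      have hv12 : v1 ≠ v2 := fun h => hnl a1 (by rw [hta1, hsa1]; exact h.symm)
      have hv23 : v2 ≠ v3 := fun h => hnl a2 (by rw [hta2, hsa2]; exact h.symm)
      have hv13 : v1 ≠ v3 := fun h => hnl a3 (by rw [hta3, hsa3]; exact h)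
      have hv14 : v1 ≠ v4 := fun h => hnl b1 (by rw [htb1, hsb1]; exact h.symm)
      have hv24 : v2 ≠ v4 := fun h => hF1b a1 (by rw [← hb1, htb1, hta1]; exact h.symm)
      have hv34 : v3 ≠ v4 := fun h => hF1c a1 (by rw [← hb1, htb1, hfa1, hta2]; exact h.symm)
      have hv25 : v2 ≠ v5 := fun h => hnl b2 (by rw [htb2, hsb2]; exact h.symm)
      have hv35 : v3 ≠ v5 := fun h => hF1b a2 (by rw [← hb2, htb2, hta2]; exact h.symm)
      have hv15 : v1 ≠ v5 := fun h => hF1c a2 (by rw [← hb2, htb2, hfa2, hta3]; exact h.symm)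
      have hv36 : v3 ≠ v6 := fun h => hnl b3 (by rw [htb3, hsb3]; exact h.symm)
      have hv16 : v1 ≠ v6 := fun h => hF1b a3 (by rw [← hb3, htb3, hta3]; exact h.symm)
      have hv26 : v2 ≠ v6 := fun h => hF1c a3 (by rw [← hb3, htb3, hfa3, hta1]; exact h.symm)
      have hv45 : v4 ≠ v5 := fun h => hF2 a1 (by rw [hfa1, ← hb2, htb2, ← hb1, htb1]; exact h.symm)
      have hv56 : v5 ≠ v6 := fun h => hF2 a2 (by rw [hfa2, ← hb3, htb3, ← hb2, htb2]; exact h.symm)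
      have hv46 : v4 ≠ v6 := fun h => hF2 a3 (by rw [hfa3, ← hb1, htb1, ← hb3, htb3]; exact h)
      have hneq : ∀ {x y : A} {p q : V}, s x = p → s y = q → p ≠ q → x ≠ y := by
        rintro x y p q rfl rfl hpq rfl; exact hpq rfl
      -- arrow distinctness (the 66 pairs needed for the if-chain)
      have na2a1 : a2 ≠ a1 := hneq hsa2 hsa1 hv12.symm
      have na3a1 : a3 ≠ a1 := hneq hsa3 hsa1 hv13.symm
      have na3a2 : a3 ≠ a2 := hneq hsa3 hsa2 hv23.symm
      have nb1a1 : b1 ≠ a1 := hb1 ▸ (hbar a1).1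
      have nb1a2 : b1 ≠ a2 := hneq hsb1 hsa2 hv12
      have nb1a3 : b1 ≠ a3 := hneq hsb1 hsa3 hv13
      have nb2a1 : b2 ≠ a1 := hneq hsb2 hsa1 hv12.symm
      have nb2a2 : b2 ≠ a2 := hb2 ▸ (hbar a2).1
      have nb2a3 : b2 ≠ a3 := hneq hsb2 hsa3 hv23
      have nb2b1 : b2 ≠ b1 := hneq hsb2 hsb1 hv12.symm
      have nb3a1 : b3 ≠ a1 := hneq hsb3 hsa1 hv13.symm
      have nb3a2 : b3 ≠ a2 := hneq hsb3 hsa2 hv23.symm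
      have nb3a3 : b3 ≠ a3 := hb3 ▸ (hbar a3).1
      have nb3b1 : b3 ≠ b1 := hneq hsb3 hsb1 hv13.symm
      have nb3b2 : b3 ≠ b2 := hneq hsb3 hsb2 hv23.symm
      have nc1a1 : c1 ≠ a1 := hneq hsc1 hsa1 hv14.symm
      have nc1a2 : c1 ≠ a2 := hneq hsc1 hsa2 hv24.symm
      have nc1a3 : c1 ≠ a3 := hneq hsc1 hsa3 hv34.symm
      have nc1b1 : c1 ≠ b1 := hneq hsc1 hsb1 hv14.symm
      have nc1b2 : c1 ≠ b2 := hneq hsc1 hsb2 hv24.symm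
      have nc1b3 : c1 ≠ b3 := hneq hsc1 hsb3 hv34.symm
      have nc2a1 : c2 ≠ a1 := hneq hsc2 hsa1 hv15.symm
      have nc2a2 : c2 ≠ a2 := hneq hsc2 hsa2 hv25.symm
      have nc2a3 : c2 ≠ a3 := hneq hsc2 hsa3 hv35.symm
      have nc2b1 : c2 ≠ b1 := hneq hsc2 hsb1 hv15.symm
      have nc2b2 : c2 ≠ b2 := hneq hsc2 hsb2 hv25.symm
      have nc2b3 : c2 ≠ b3 := hneq hsc2 hsb3 hv35.symm
      have nc2c1 : c2 ≠ c1 := hneq hsc2 hsc1 hv45.symm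
      have nc3a1 : c3 ≠ a1 := hneq hsc3 hsa1 hv16.symm
      have nc3a2 : c3 ≠ a2 := hneq hsc3 hsa2 hv26.symm
      have nc3a3 : c3 ≠ a3 := hneq hsc3 hsa3 hv36.symm
      have nc3b1 : c3 ≠ b1 := hneq hsc3 hsb1 hv16.symm
      have nc3b2 : c3 ≠ b2 := hneq hsc3 hsb2 hv26.symm
      have nc3b3 : c3 ≠ b3 := hneq hsc3 hsb3 hv36.symm
      have nc3c1 : c3 ≠ c1 := hneq hsc3 hsc1 hv46.symm
      have nc3c2 : c3 ≠ c2 := hneq hsc3 hsc2 hv56.symm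
      have nd1a1 : d1 ≠ a1 := hneq hsd1 hsa1 hv15.symm
      have nd1a2 : d1 ≠ a2 := hneq hsd1 hsa2 hv25.symm
      have nd1a3 : d1 ≠ a3 := hneq hsd1 hsa3 hv35.symm
      have nd1b1 : d1 ≠ b1 := hneq hsd1 hsb1 hv15.symm
      have nd1b2 : d1 ≠ b2 := hneq hsd1 hsb2 hv25.symm
      have nd1b3 : d1 ≠ b3 := hneq hsd1 hsb3 hv35.symm
      have nd1c1 : d1 ≠ c1 := hneq hsd1 hsc1 hv45.symm
      have nd1c2 : d1 ≠ c2 := hd1c2 ▸ (hbar c2).1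
      have nd1c3 : d1 ≠ c3 := hneq hsd1 hsc3 hv56
      have nd2a1 : d2 ≠ a1 := hneq hsd2 hsa1 hv16.symm
      have nd2a2 : d2 ≠ a2 := hneq hsd2 hsa2 hv26.symm
      have nd2a3 : d2 ≠ a3 := hneq hsd2 hsa3 hv36.symm
      have nd2b1 : d2 ≠ b1 := hneq hsd2 hsb1 hv16.symm
      have nd2b2 : d2 ≠ b2 := hneq hsd2 hsb2 hv26.symm
      have nd2b3 : d2 ≠ b3 := hneq hsd2 hsb3 hv36.symm
      have nd2c1 : d2 ≠ c1 := hneq hsd2 hsc1 hv46.symm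
      have nd2c2 : d2 ≠ c2 := hneq hsd2 hsc2 hv56.symm
      have nd2c3 : d2 ≠ c3 := hd2c3 ▸ (hbar c3).1
      have nd2d1 : d2 ≠ d1 := hneq hsd2 hsd1 hv56.symm
      have nd3a1 : d3 ≠ a1 := hneq hsd3 hsa1 hv14.symm
      have nd3a2 : d3 ≠ a2 := hneq hsd3 hsa2 hv24.symm
      have nd3a3 : d3 ≠ a3 := hneq hsd3 hsa3 hv34.symm
      have nd3b1 : d3 ≠ b1 := hneq hsd3 hsb1 hv14.symm
      have nd3b2 : d3 ≠ b2 := hneq hsd3 hsb2 hv24.symm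
      have nd3b3 : d3 ≠ b3 := hneq hsd3 hsb3 hv34.symm
      have nd3c1 : d3 ≠ c1 := hd3c1 ▸ (hbar c1).1
      have nd3c2 : d3 ≠ c2 := hneq hsd3 hsc2 hv45
      have nd3c3 : d3 ≠ c3 := hneq hsd3 hsc3 hv46
      have nd3d1 : d3 ≠ d1 := hneq hsd3 hsd1 hv45
      have nd3d2 : d3 ≠ d2 := hneq hsd3 hsd2 hv46
      -- outgoing classification
      have hout1 : ∀ e : A, s e = v1 → e = a1 ∨ e = b1 := fun e he => by
        rcases pSame s hout bar hbar a1 e (by rw [he, hsa1]) with h | h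
        · exact Or.inl h
        · exact Or.inr (by rw [h, ← hb1])
      have hout2 : ∀ e : A, s e = v2 → e = a2 ∨ e = b2 := fun e he => by
        rcases pSame s hout bar hbar a2 e (by rw [he, hsa2]) with h | h
        · exact Or.inl h
        · exact Or.inr (by rw [h, ← hb2])
      have hout3 : ∀ e : A, s e = v3 → e = a3 ∨ e = b3 := fun e he => by
        rcases pSame s hout bar hbar a3 e (by rw [he, hsa3]) with h | h
        · exact Or.inl h
        · exact Or.inr (by rw [h, ← hb3])
      have hout4 : ∀ e : A, s e = v4 → e = c1 ∨ e = d3 := fun e he => by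
        rcases pSame s hout bar hbar c1 e (by rw [he, hsc1]) with h | h
        · exact Or.inl h
        · exact Or.inr (by rw [h, ← hd3c1])
      have hout5 : ∀ e : A, s e = v5 → e = c2 ∨ e = d1 := fun e he => by
        rcases pSame s hout bar hbar c2 e (by rw [he, hsc2]) with h | h
        · exact Or.inl h
        · exact Or.inr (by rw [h, ← hd1c2])
      have hout6 : ∀ e : A, s e = v6 → e = c3 ∨ e = d2 := fun e he => by
        rcases pSame s hout bar hbar c3 e (by rw [he, hsc3]) with h | h
        · exact Or.inl h
        · exact Or.inr (by rw [h, ← hd2c3])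
      -- incoming classification
      have hin1 : ∀ e : A, t e = v1 → e = a3 ∨ e = d1 := fun e he => by
        rcases same_target a3 e (by rw [he, hta3]) with h | h
        · exact Or.inl h
        · rw [hfa3, ← hb1, hfb1, hfc1] at h
          exact Or.inr h
      have hin2 : ∀ e : A, t e = v2 → e = a1 ∨ e = d2 := fun e he => by
        rcases same_target a1 e (by rw [he, hta1]) with h | h
        · exact Or.inl h
        · rw [hfa1, ← hb2, hfb2, hfc2] at h
          exact Or.inr h
      have hin3 : ∀ e : A, t e = v3 → e = a2 ∨ e = d3 := fun e he => by
        rcases same_target a2 e (by rw [he, hta2]) with h | h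
        · exact Or.inl h
        · rw [hfa2, ← hb3, hfb3, hfc3] at h
          exact Or.inr h
      have hin4 : ∀ e : A, t e = v4 → e = b1 ∨ e = c3 := fun e he => by
        rcases same_target b1 e (by rw [he, htb1]) with h | h
        · exact Or.inl h
        · rw [hfb1, ← hd3c1, hfd3, hfb3] at h
          exact Or.inr h
      have hin5 : ∀ e : A, t e = v5 → e = b2 ∨ e = c1 := fun e he => by
        rcases same_target b2 e (by rw [he, htb2]) with h | h
        · exact Or.inl h
        · rw [hfb2, ← hd1c2, hfd1, hfb1] at h
          exact Or.inr h
      have hin6 : ∀ e : A, t e = v6 → e = b3 ∨ e = c2 := fun e he => by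
        rcases same_target b3 e (by rw [he, htb3]) with h | h
        · exact Or.inl h
        · rw [hfb3, ← hd2c3, hfd2, hfb2] at h
          exact Or.inr h
      -- vertex classification
      have hVc : ∀ u : V, u = v1 ∨ u = v2 ∨ u = v3 ∨ u = v4 ∨ u = v5 ∨ u = v6 := by
        intro u
        have hstep : ∀ x y : V, (∃ e : A, s e = x ∧ t e = y) →
            ((x = v1 ∨ x = v2 ∨ x = v3 ∨ x = v4 ∨ x = v5 ∨ x = v6) ↔
             (y = v1 ∨ y = v2 ∨ y = v3 ∨ y = v4 ∨ y = v5 ∨ y = v6)) := by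
          rintro x y ⟨e, rfl, rfl⟩
          constructor
          · rintro (h | h | h | h | h | h)
            · rcases hout1 e h with rfl | rfl
              · rw [hta1]; exact Or.inr (Or.inl rfl)
              · rw [htb1]; exact Or.inr (Or.inr (Or.inr (Or.inl rfl)))
            · rcases hout2 e h with rfl | rfl
              · rw [hta2]; exact Or.inr (Or.inr (Or.inl rfl))
              · rw [htb2]; exact Or.inr (Or.inr (Or.inr (Or.inr (Or.inl rfl))))
            · rcases hout3 e h with rfl | rfl
              · rw [hta3]; exact Or.inl rfl
              · rw [htb3]; exact Or.inr (Or.inr (Or.inr (Or.inr (Or.inr rfl))))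
            · rcases hout4 e h with rfl | rfl
              · rw [htc1]; exact Or.inr (Or.inr (Or.inr (Or.inr (Or.inl rfl))))
              · rw [htd3]; exact Or.inr (Or.inr (Or.inl rfl))
            · rcases hout5 e h with rfl | rfl
              · rw [htc2]; exact Or.inr (Or.inr (Or.inr (Or.inr (Or.inr rfl))))
              · rw [htd1]; exact Or.inl rfl
            · rcases hout6 e h with rfl | rfl
              · rw [htc3]; exact Or.inr (Or.inr (Or.inr (Or.inl rfl)))
              · rw [htd2]; exact Or.inr (Or.inl rfl)
          · rintro (h | h | h | h | h | h)
            · rcases hin1 e h with rfl | rfl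
              · rw [hsa3]; exact Or.inr (Or.inr (Or.inl rfl))
              · rw [hsd1]; exact Or.inr (Or.inr (Or.inr (Or.inr (Or.inl rfl))))
            · rcases hin2 e h with rfl | rfl
              · rw [hsa1]; exact Or.inl rfl
              · rw [hsd2]; exact Or.inr (Or.inr (Or.inr (Or.inr (Or.inr rfl))))
            · rcases hin3 e h with rfl | rfl
              · rw [hsa2]; exact Or.inr (Or.inl rfl)
              · rw [hsd3]; exact Or.inr (Or.inr (Or.inr (Or.inl rfl)))
            · rcases hin4 e h with rfl | rfl
              · rw [hsb1]; exact Or.inl rfl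
              · rw [hsc3]; exact Or.inr (Or.inr (Or.inr (Or.inr (Or.inr rfl))))
            · rcases hin5 e h with rfl | rfl
              · rw [hsb2]; exact Or.inr (Or.inl rfl)
              · rw [hsc1]; exact Or.inr (Or.inr (Or.inr (Or.inl rfl)))
            · rcases hin6 e h with rfl | rfl
              · rw [hsb3]; exact Or.inr (Or.inr (Or.inl rfl))
              · rw [hsc2]; exact Or.inr (Or.inr (Or.inr (Or.inr (Or.inl rfl))))
        exact (eqvgen_iff hstep (hconn u v1)).mpr (Or.inl rfl)
      -- arrow classification
      have hAc : ∀ e : A, e = a1 ∨ e = a2 ∨ e = a3 ∨ e = b1 ∨ e = b2 ∨ e = b3 ∨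
          e = c1 ∨ e = c2 ∨ e = c3 ∨ e = d1 ∨ e = d2 ∨ e = d3 := by
        intro e
        rcases hVc (s e) with h | h | h | h | h | h
        · rcases hout1 e h with h' | h'
          exact (Or.inl h')
          exact (Or.inr (Or.inr (Or.inr (Or.inl h'))))
        · rcases hout2 e h with h' | h'
          exact (Or.inr (Or.inl h'))
          exact (Or.inr (Or.inr (Or.inr (Or.inr (Or.inl h')))))
        · rcases hout3 e h with h' | h'
          exact (Or.inr (Or.inr (Or.inl h')))
          exact (Or.inr (Or.inr (Or.inr (Or.inr (Or.inr (Or.inl h'))))))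
        · rcases hout4 e h with h' | h'
          exact (Or.inr (Or.inr (Or.inr (Or.inr (Or.inr (Or.inr (Or.inl h')))))))
          exact (Or.inr (Or.inr (Or.inr (Or.inr (Or.inr (Or.inr (Or.inr (Or.inr (Or.inr (Or.inr (Or.inr (h'))))))))))))
        · rcases hout5 e h with h' | h'
          exact (Or.inr (Or.inr (Or.inr (Or.inr (Or.inr (Or.inr (Or.inr (Or.inl h'))))))))
          exact (Or.inr (Or.inr (Or.inr (Or.inr (Or.inr (Or.inr (Or.inr (Or.inr (Or.inr (Or.inl h'))))))))))
        · rcases hout6 e h with h' | h'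
          exact (Or.inr (Or.inr (Or.inr (Or.inr (Or.inr (Or.inr (Or.inr (Or.inr (Or.inl h')))))))))
          exact (Or.inr (Or.inr (Or.inr (Or.inr (Or.inr (Or.inr (Or.inr (Or.inr (Or.inr (Or.inr (Or.inl h')))))))))))
      have hm1 : ∀ e : A, m e = 1 := by
        intro e
        rcases hfix e with ⟨h, _⟩ | ⟨_, _, h⟩
        · exact absurd h (hgfix e)
        · exact h
      -- reversed vertex inequalities
      have nv21 : v2 ≠ v1 := hv12.symm
      have nv31 : v3 ≠ v1 := hv13.symm
      have nv32 : v3 ≠ v2 := hv23.symm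
      have nv41 : v4 ≠ v1 := hv14.symm
      have nv42 : v4 ≠ v2 := hv24.symm
      have nv43 : v4 ≠ v3 := hv34.symm
      have nv51 : v5 ≠ v1 := hv15.symm
      have nv52 : v5 ≠ v2 := hv25.symm
      have nv53 : v5 ≠ v3 := hv35.symm
      have nv54 : v5 ≠ v4 := hv45.symm
      have nv61 : v6 ≠ v1 := hv16.symm
      have nv62 : v6 ≠ v2 := hv26.symm
      have nv63 : v6 ≠ v3 := hv36.symm
      have nv64 : v6 ≠ v4 := hv46.symm
      have nv65 : v6 ≠ v5 := hv56.symm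
      obtain ⟨Φ, hΦ⟩ : ∃ Φ : V → Finset (Fin 4), Φ = fun x =>
          if x = v1 then ({0,1} : Finset (Fin 4)) else if x = v2 then {1,2}
          else if x = v3 then {0,2} else if x = v4 then {0,3} else if x = v5 then {1,3}
          else {2,3} := ⟨_, rfl⟩
      have hΦ1 : Φ v1 = {0,1} := by rw [hΦ]; simp
      have hΦ2 : Φ v2 = {1,2} := by rw [hΦ]; simp [nv21]
      have hΦ3 : Φ v3 = {0,2} := by rw [hΦ]; simp [nv31, nv32]
      have hΦ4 : Φ v4 = {0,3} := by rw [hΦ]; simp [nv41, nv42, nv43]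
      have hΦ5 : Φ v5 = {1,3} := by rw [hΦ]; simp [nv51, nv52, nv53, nv54]
      have hΦ6 : Φ v6 = {2,3} := by rw [hΦ]; simp [nv61, nv62, nv63, nv64, nv65]
      obtain ⟨F, hF⟩ : ∃ F : A → Fin 4 × Fin 3, F = fun e =>
          if e = a1 then ((0,0) : Fin 4 × Fin 3) else if e = a2 then (0,1)
          else if e = a3 then (0,2) else if e = b1 then (2,2) else if e = b2 then (3,2)
          else if e = b3 then (1,0) else if e = c1 then (2,0) else if e = c2 then (3,0)
          else if e = c3 then (1,1) else if e = d1 then (2,1) else if e = d2 then (3,1)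
          else (1,2) := ⟨_, rfl⟩
      have hP1 : F a1 = (0,0) := by rw [hF]; simp
      have hP2 : F a2 = (0,1) := by rw [hF]; simp [na2a1]
      have hP3 : F a3 = (0,2) := by rw [hF]; simp [na3a1, na3a2]
      have hP4 : F b1 = (2,2) := by rw [hF]; simp [nb1a1, nb1a2, nb1a3]
      have hP5 : F b2 = (3,2) := by rw [hF]; simp [nb2a1, nb2a2, nb2a3, nb2b1]
      have hP6 : F b3 = (1,0) := by rw [hF]; simp [nb3a1, nb3a2, nb3a3, nb3b1, nb3b2]
      have hP7 : F c1 = (2,0) := by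
        rw [hF]; simp [nc1a1, nc1a2, nc1a3, nc1b1, nc1b2, nc1b3]
      have hP8 : F c2 = (3,0) := by
        rw [hF]; simp [nc2a1, nc2a2, nc2a3, nc2b1, nc2b2, nc2b3, nc2c1]
      have hP9 : F c3 = (1,1) := by
        rw [hF]; simp [nc3a1, nc3a2, nc3a3, nc3b1, nc3b2, nc3b3, nc3c1, nc3c2]
      have hP10 : F d1 = (2,1) := by
        rw [hF]; simp [nd1a1, nd1a2, nd1a3, nd1b1, nd1b2, nd1b3, nd1c1, nd1c2, nd1c3]
      have hP11 : F d2 = (3,1) := by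
        rw [hF]; simp [nd2a1, nd2a2, nd2a3, nd2b1, nd2b2, nd2b3, nd2c1, nd2c2, nd2c3, nd2d1]
      have hP12 : F d3 = (1,2) := by
        rw [hF]
        simp [nd3a1, nd3a2, nd3a3, nd3b1, nd3b2, nd3b3, nd3c1, nd3c2, nd3c3, nd3d1, nd3d2]
      have hLI : Function.LeftInverse
          (fun p : Fin 4 × Fin 3 => ![![a1,a2,a3],![b3,c3,d3],![c1,d1,b1],![c2,d2,b2]] p.1 p.2)
          F := by
        intro e
        rcases hAc e with rfl | rfl | rfl | rfl | rfl | rfl | rfl | rfl | rfl | rfl | rfl | rfl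
        · rw [hP1]; rfl
        · rw [hP2]; rfl
        · rw [hP3]; rfl
        · rw [hP4]; rfl
        · rw [hP5]; rfl
        · rw [hP6]; rfl
        · rw [hP7]; rfl
        · rw [hP8]; rfl
        · rw [hP9]; rfl
        · rw [hP10]; rfl
        · rw [hP11]; rfl
        · rw [hP12]; rfl
      have hRI : Function.RightInverse
          (fun p : Fin 4 × Fin 3 => ![![a1,a2,a3],![b3,c3,d3],![c1,d1,b1],![c2,d2,b2]] p.1 p.2)
          F := by
        intro p
        obtain ⟨i, j⟩ := p
        fin_cases i <;> fin_cases j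
        · exact hP1
        · exact hP2
        · exact hP3
        · exact hP6
        · exact hP9
        · exact hP12
        · exact hP7
        · exact hP10
        · exact hP4
        · exact hP8
        · exact hP11
        · exact hP5
      refine ⟨Φ, ⟨F, _, hLI, hRI⟩, ?_, ?_, ?_, ?_, ?_, fun e => hm1 e⟩
      · -- injectivity of Φ
        intro x y hxy
        rcases hVc x with rfl | rfl | rfl | rfl | rfl | rfl <;>
          rcases hVc y with rfl | rfl | rfl | rfl | rfl | rfl <;>
          simp only [hΦ1, hΦ2, hΦ3, hΦ4, hΦ5, hΦ6] at hxy <;>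
          first
            | rfl
            | exact absurd hxy (by decide)
      · -- range of Φ
        ext S
        simp only [Set.mem_range, Set.mem_setOf_eq]
        constructor
        · rintro ⟨x, rfl⟩
          rcases hVc x with rfl | rfl | rfl | rfl | rfl | rfl <;>
            simp only [hΦ1, hΦ2, hΦ3, hΦ4, hΦ5, hΦ6] <;> decide
        · intro hS
          have key : ∀ T : Finset (Fin 4), T.card = 2 → T = {0,1} ∨ T = {1,2} ∨ T = {0,2} ∨
              T = {0,3} ∨ T = {1,3} ∨ T = {2,3} := by decide
          rcases key S hS with rfl | rfl | rfl | rfl | rfl | rfl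
          exacts [⟨v1, hΦ1⟩, ⟨v2, hΦ2⟩, ⟨v3, hΦ3⟩, ⟨v4, hΦ4⟩, ⟨v5, hΦ5⟩, ⟨v6, hΦ6⟩]
      · -- source condition
        intro e
        simp only [Equiv.coe_fn_mk]
        rcases hAc e with rfl | rfl | rfl | rfl | rfl | rfl | rfl | rfl | rfl | rfl | rfl | rfl <;>
          simp only [hP1, hP2, hP3, hP4, hP5, hP6, hP7, hP8, hP9, hP10, hP11, hP12,
            hsa1, hsa2, hsa3, hsb1, hsb2, hsb3, hsc1, hsc2, hsc3, hsd1, hsd2, hsd3,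
            hΦ1, hΦ2, hΦ3, hΦ4, hΦ5, hΦ6] <;> decide
      · -- target condition
        intro e
        simp only [Equiv.coe_fn_mk]
        rcases hAc e with rfl | rfl | rfl | rfl | rfl | rfl | rfl | rfl | rfl | rfl | rfl | rfl <;>
          simp only [hP1, hP2, hP3, hP4, hP5, hP6, hP7, hP8, hP9, hP10, hP11, hP12,
            hta1, hta2, hta3, htb1, htb2, htb3, htc1, htc2, htc3, htd1, htd2, htd3,
            hΦ1, hΦ2, hΦ3, hΦ4, hΦ5, hΦ6] <;> decide
      · -- f condition
        intro e
        simp only [Equiv.coe_fn_mk]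
        rcases hAc e with rfl | rfl | rfl | rfl | rfl | rfl | rfl | rfl | rfl | rfl | rfl | rfl <;>
          simp only [hfa1, hfa2, hfa3, hfb1, hfb2, hfb3, hfc1, hfc2, hfc3, hfd1, hfd2, hfd3,
            hP1, hP2, hP3, hP4, hP5, hP6, hP7, hP8, hP9, hP10, hP11, hP12] <;> decide
  · rintro (⟨φ₀, φ₁, hS, hT, hF, hM⟩ | ⟨φ₀, φ₁, hinj0, hrange, hS, hT, hF, hM⟩) <;> intro a
    · -- punctured monogon
      have hbarP : ∀ e : A, φ₁ (bar e) = pmBar (φ₁ e) := by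
        intro e
        have key : ∀ x y : Fin 4, y ≠ x → puncturedMonogonS y = puncturedMonogonS x →
            y = pmBar x := by decide
        exact key _ _ (fun h => (hbar e).1 (φ₁.injective h))
          (by rw [hS, hS, (hbar e).2])
      have hgP : ∀ e : A, φ₁ (g e) = pmG (φ₁ e) := by
        intro e
        have key : ∀ x : Fin 4, pmBar (puncturedMonogonF x) = pmG x := by decide
        rw [hg, hbarP, hF, key]
      have key2 : ∀ x : Fin 4, (pmG x = x ∧ puncturedMonogonM x = 3) ∨
          (pmG x ≠ x ∧ pmG (pmG (pmG x)) = x ∧ puncturedMonogonM x = 1) := by decide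
      rcases key2 (φ₁ a) with ⟨h1, h2⟩ | ⟨h1, h2, h3⟩
      · have hga : g a = a := φ₁.injective (by rw [hgP, h1])
        rw [Function.minimalPeriod_eq_one_iff_isFixedPt.mpr hga, hM a, h2]
      · have hga : g a ≠ a := fun h => h1 (by rw [← hgP, h])
        have hg3a : g (g (g a)) = a := φ₁.injective (by rw [hgP, hgP, hgP, h2])
        rw [minper_three g a hg3a hga, hM a, h3]
    · -- tetrahedron
      have hbarT : ∀ e : A, φ₁ (bar e) = tetBar (φ₁ e) := by
        intro e
        have key : ∀ x y : Fin 4 × Fin 3, y ≠ x → tetS y = tetS x → y = tetBar x := by decide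
        exact key _ _ (fun h => (hbar e).1 (φ₁.injective h))
          (by rw [hS, hS, (hbar e).2])
      have hgT : ∀ e : A, φ₁ (g e) = tetG (φ₁ e) := by
        intro e
        rw [hg, hbarT, hF]; rfl
      have key2 : ∀ x : Fin 4 × Fin 3, tetG x ≠ x ∧ tetG (tetG (tetG x)) = x := by decide
      have hga : g a ≠ a := fun h => (key2 (φ₁ a)).1 (by rw [← hgT, h])
      have hg3a : g (g (g a)) = a :=
        φ₁.injective (by rw [hgT, hgT, hgT, (key2 (φ₁ a)).2])
      rw [minper_three g a hg3a hga, hM a, one_mul]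
end

section
/- Every connected triangulation quiver (Q, f) with exactly two vertices is isomorphic, as a ribbon quiver, to the punctured-monogon triangulation quiver: vertices {1, 2}, arrows α : 1→1, β : 1→2, γ : 2→1, η : 2→2, with f(α) = β, f(β) = γ, f(γ) = α, f(η) = η. -/
set_option maxRecDepth 100000 in
set_option maxHeartbeats 2000000 in
set_option synthInstance.maxHeartbeats 1000000 in
set_option synthInstance.maxSize 2000 in
private lemma tq_key : ∀ (f : Fin 4 → Fin 4), (∀ a, f (f (f a)) = a) →
    ∀ (s t : Fin 4 → Fin 2),
    (∀ a, s (f a) = t a) →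
    (∃ e, s e ≠ t e) →
    (∀ v, (Finset.univ.filter (fun a => s a = v)).card = 2) →
    (∀ v, (Finset.univ.filter (fun a => t a = v)).card = 2) →
    ∃ φ₀ : Fin 2 → Fin 2, ∃ φ₁ : Fin 4 → Fin 4,
      (∀ e, puncturedMonogonS (φ₁ e) = φ₀ (s e)) ∧
      (∀ e, puncturedMonogonT (φ₁ e) = φ₀ (t e)) ∧
      (∀ e, φ₁ (f e) = puncturedMonogonF (φ₁ e)) ∧
      Function.Bijective φ₀ ∧ Function.Bijective φ₁ := by decide


/-- Every connected triangulation quiver with exactly two vertices is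
isomorphic, as a ribbon quiver, to the punctured-monogon triangulation quiver. -/
theorem triangulationQuiver_two_vertices {V A : Type*} [Fintype V] [Fintype A]
    [DecidableEq V] [DecidableEq A]
    (s t : A → V) (f : A → A)
    (hf : Function.Bijective f)
    (hout : ∀ v : V, (Finset.univ.filter (fun a => s a = v)).card = 2)
    (hin : ∀ v : V, (Finset.univ.filter (fun a => t a = v)).card = 2)
    (hsf : ∀ a : A, s (f a) = t a)
    (hf3 : ∀ a : A, f (f (f a)) = a)
    (hne : Nonempty V)
    (hconn : ∀ u v : V, Relation.EqvGen (fun x y => ∃ e : A, s e = x ∧ t e = y) u v)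
    (hV : Fintype.card V = 2) :
    ∃ (φ₀ : V ≃ Fin 2) (φ₁ : A ≃ Fin 4),
      (∀ e : A, puncturedMonogonS (φ₁ e) = φ₀ (s e)) ∧
      (∀ e : A, puncturedMonogonT (φ₁ e) = φ₀ (t e)) ∧
      (∀ e : A, φ₁ (f e) = puncturedMonogonF (φ₁ e)) := by
  -- card A = 4
  have hA : Fintype.card A = 4 := by
    have h1 : (Finset.univ : Finset A).card =
        ∑ v : V, (Finset.univ.filter (fun a => s a = v)).card :=
      Finset.card_eq_sum_card_fiberwise (fun a _ => Finset.mem_univ (s a))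
    rw [Fintype.card, h1]
    simp [hout, hV]
  have eV : V ≃ Fin 2 := Fintype.equivFinOfCardEq hV
  have eA : A ≃ Fin 4 := Fintype.equivFinOfCardEq hA
  set s' : Fin 4 → Fin 2 := fun i => eV (s (eA.symm i)) with hs'
  set t' : Fin 4 → Fin 2 := fun i => eV (t (eA.symm i)) with ht'
  set f' : Fin 4 → Fin 4 := fun i => eA (f (eA.symm i)) with hf'
  -- exists a crossing arrow
  have hcross : ∃ e : Fin 4, s' e ≠ t' e := by
    by_contra hno
    push_neg at hno
    have heq : ∀ a : A, s a = t a := by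
      intro a
      have := hno (eA a)
      simp only [hs', ht', Equiv.symm_apply_apply] at this
      exact eV.injective this
    have keystep : ∀ u v : V, Relation.EqvGen (fun x y => ∃ e : A, s e = x ∧ t e = y) u v → u = v := by
      intro u v h
      induction h with
      | rel x y hr => obtain ⟨e, he1, he2⟩ := hr; rw [← he1, ← he2, heq]
      | refl x => rfl
      | symm x y _ ih => exact ih.symm
      | trans x y z _ _ ih1 ih2 => exact ih1.trans ih2
    have : eV.symm 0 = eV.symm 1 := keystep _ _ (hconn _ _)
    simpa using eV.symm.injective this
  have hfilt : ∀ (g : A → V) (g' : Fin 4 → Fin 2),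
      (∀ i, g' i = eV (g (eA.symm i))) → ∀ w : Fin 2,
      (Finset.univ.filter (fun i => g' i = w)).card =
      (Finset.univ.filter (fun a => g a = eV.symm w)).card := by
    intro g g' hg w
    apply Finset.card_bij (fun i _ => eA.symm i)
    · intro i hi
      simp only [Finset.mem_filter, Finset.mem_univ, true_and] at hi ⊢
      rw [hg] at hi
      exact (Equiv.eq_symm_apply eV).mpr hi
    · intro i _ j _ h
      exact eA.symm.injective h
    · intro a ha
      simp only [Finset.mem_filter, Finset.mem_univ, true_and] at ha
      refine ⟨eA a, ?_, by simp⟩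
      simp [Finset.mem_filter, hg, ha]
  obtain ⟨φ₀, φ₁, h1, h2, h3, hb0, hb1⟩ :=
    tq_key f'
      (by intro a; simp [hf', hf3])
      s' t'
      (by intro a; simp [hs', ht', hf', hsf])
      hcross
      (by intro w; rw [hfilt s s' (fun _ => rfl) w]; exact hout _)
      (by intro w; rw [hfilt t t' (fun _ => rfl) w]; exact hin _)
  refine ⟨eV.trans (Equiv.ofBijective φ₀ hb0), eA.trans (Equiv.ofBijective φ₁ hb1),
    ?_, ?_, ?_⟩
  · intro e
    have := h1 (eA e)
    simpa [hs'] using this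
  · intro e
    have := h2 (eA e)
    simpa [ht'] using this
  · intro e
    have := h3 (eA e)
    simpa [hf'] using this
end

section
/- Let (Q, f) be a connected ribbon quiver. Then the subgroup of the group of permutations of Q₁ generated by f and g acts transitively on Q₁: for any two arrows α, β ∈ Q₁ there is a permutation in the subgroup generated by f and g taking α to β. -/
/-- Let `(Q, f)` be a connected ribbon quiver. Then the subgroup of the
permutation group of `Q₁` generated by `f` and `g` acts transitively on `Q₁`. -/
theorem ribbonQuiver_fg_transitive {V A : Type*} [Fintype V] [Fintype A]
    [DecidableEq V] [DecidableEq A]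
    (s t : A → V) (f : Equiv.Perm A)
    (hout : ∀ v : V, (Finset.univ.filter (fun a => s a = v)).card = 2)
    (hin : ∀ v : V, (Finset.univ.filter (fun a => t a = v)).card = 2)
    (hsf : ∀ a : A, s (f a) = t a)
    (bar : A → A) (hbar : ∀ a : A, bar a ≠ a ∧ s (bar a) = s a)
    (g : Equiv.Perm A) (hg : ∀ a : A, g a = bar (f a))
    (hne : Nonempty V)
    (hconn : ∀ u v : V, Relation.EqvGen (fun x y => ∃ e : A, s e = x ∧ t e = y) u v) :
    ∀ α β : A, ∃ p ∈ Subgroup.closure ({f, g} : Set (Equiv.Perm A)), p α = β := by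
  set S := Subgroup.closure ({f, g} : Set (Equiv.Perm A)) with hS
  have hfS : f ∈ S := Subgroup.subset_closure (Set.mem_insert _ _)
  have hgS : g ∈ S := Subgroup.subset_closure (Set.mem_insert_of_mem _ rfl)
  set R : A → A → Prop := fun a b => ∃ p ∈ S, p a = b with hR
  have hrefl : ∀ a, R a a := fun a => ⟨1, S.one_mem, rfl⟩
  have hsymm : ∀ {a b}, R a b → R b a := by
    rintro a b ⟨p, hp, rfl⟩
    exact ⟨p⁻¹, S.inv_mem hp, p.symm_apply_apply a⟩
  have htrans : ∀ {a b c}, R a b → R b c → R a c := by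
    rintro a b c ⟨p, hp, rfl⟩ ⟨q, hq, rfl⟩
    exact ⟨q * p, S.mul_mem hq hp, rfl⟩
  -- bar is realized by g * f⁻¹
  have hbarR : ∀ a, R a (bar a) := by
    intro a
    refine ⟨g * f⁻¹, S.mul_mem hgS (S.inv_mem hfS), ?_⟩
    simp [hg (f.symm a)]
  -- arrows with the same source are related
  have key1 : ∀ a b : A, s a = s b → R a b := by
    intro a b hab
    by_cases h : a = b
    · subst h; exact hrefl a
    · have hcard := hout (s a)
      obtain ⟨x, y, hxy, hset⟩ := Finset.card_eq_two.mp hcard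
      have ha : a ∈ Finset.univ.filter (fun e => s e = s a) := by simp
      have hb : b ∈ Finset.univ.filter (fun e => s e = s a) := by simp [hab.symm]
      have hba : bar a ∈ Finset.univ.filter (fun e => s e = s a) := by
        simp [(hbar a).2]
      rw [hset] at ha hb hba
      simp only [Finset.mem_insert, Finset.mem_singleton] at ha hb hba
      have : bar a = b := by
        rcases ha with rfl | rfl <;> rcases hb with rfl | rfl <;>
          rcases hba with h1 | h1 <;> first
          | exact h1
          | exact absurd rfl h
          | exact absurd h1 (hbar _).1
          | exact absurd h1.symm hxy
          | exact absurd h1 hxy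
      rw [← this]; exact hbarR a
  have keyf : ∀ a, R a (f a) := fun a => ⟨f, hfS, rfl⟩
  -- any vertex has an outgoing arrow
  have hex : ∀ v : V, ∃ a : A, s a = v := by
    intro v
    have : 0 < (Finset.univ.filter (fun a => s a = v)).card := by rw [hout v]; norm_num
    obtain ⟨a, ha⟩ := Finset.card_pos.mp this
    simp only [Finset.mem_filter] at ha
    exact ⟨a, ha.2⟩
  -- main induction on connectivity
  have main : ∀ u v : V, Relation.EqvGen (fun x y => ∃ e : A, s e = x ∧ t e = y) u v →
      ∀ a b : A, s a = u → s b = v → R a b := by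
    intro u v h
    induction h with
    | rel x y hxy =>
      intro a b ha hb
      obtain ⟨e, hse, hte⟩ := hxy
      have h1 : R a e := key1 a e (by rw [ha, hse])
      have h2 : R e (f e) := keyf e
      have h3 : R (f e) b := key1 (f e) b (by rw [hsf e, hte, hb])
      exact htrans (htrans h1 h2) h3
    | refl x => intro a b ha hb; exact key1 a b (by rw [ha, hb])
    | symm x y _ ih => intro a b ha hb; exact hsymm (ih b a hb ha)
    | trans x y z _ _ ih1 ih2 =>
      intro a b ha hb
      obtain ⟨c, hc⟩ := hex y
      exact htrans (ih1 a c ha hc) (ih2 c b hc hb)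
  intro α β
  exact main (s α) (s β) (hconn _ _) α β rfl rfl
end
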